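/- Under the standing assumptions, for all θ, θ' ∈ ℝ^d, every 0 < λ < 1 and every ε_h ∈ (0,1/2], the tamed coefficient is globally Lipschitz with constant L₀ λ^{−ε_h}: |h_λ(θ) − h_λ(θ')| ≤ L₀ λ^{−ε_h} |θ − θ'|, where L₀ := 2a + 4K_H + (l+1)(2K_h + a). -/

import Mathlib

open Real

lemma kT_core (l : ℕ) {x lam eps : ℝ} (hx : 0 ≤ x) (hlam0 : 0 < lam) (heps : 0 < eps) :
    x ^ ((l:ℝ)+1) ≤ lam ^ (-eps) * (1 + lam * x ^ (((l:ℝ)+1)/eps)) ^ eps := by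
  set r := ((l:ℝ)+1)/eps with hr
  have h1 : (lam * x^r) ^ eps ≤ (1 + lam * x^r) ^ eps := by
    apply Real.rpow_le_rpow (by positivity) (by nlinarith [Real.rpow_nonneg hx r]) heps.le
  have h2 : (lam * x^r) ^ eps = lam ^ eps * x ^ ((l:ℝ)+1) := by
    rw [Real.mul_rpow hlam0.le (Real.rpow_nonneg hx r), ← Real.rpow_mul hx]
    rw [div_mul_cancel₀]
    exact heps.ne'
  have h3 : lam ^ (-eps) * lam ^ eps = 1 := by
    rw [← Real.rpow_add hlam0]; simp
  calc x ^ ((l:ℝ)+1) = lam ^ (-eps) * (lam ^ eps * x ^ ((l:ℝ)+1)) := by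
        rw [← mul_assoc, h3, one_mul]
    _ ≤ lam ^ (-eps) * (1 + lam * x^r) ^ eps := by
        rw [← h2]; exact mul_le_mul_of_nonneg_left h1 (Real.rpow_nonneg hlam0.le _)

lemma kT_phi1 {lam eps : ℝ} (hlam0 : 0 < lam) (hlam1 : lam < 1) (heps : 0 < eps) :
    1 ≤ lam ^ (-eps) := by
  rw [Real.rpow_neg hlam0.le]
  have h1 : lam ^ eps ≤ 1 := Real.rpow_le_one hlam0.le hlam1.le heps.le
  have h2 : (0:ℝ) < lam ^ eps := Real.rpow_pos_of_pos hlam0 eps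
  rw [le_inv_comm₀ one_pos h2] <;> simpa

lemma kT_G1 {x lam r : ℝ} (hx : 0 ≤ x) (hlam0 : 0 < lam) : 1 ≤ 1 + lam * x ^ r := by
  nlinarith [Real.rpow_nonneg hx r]

lemma kT_Ge1 {x lam r eps : ℝ} (hx : 0 ≤ x) (hlam0 : 0 < lam) (heps : 0 < eps) :
    1 ≤ (1 + lam * x ^ r) ^ eps :=
  Real.one_le_rpow (kT_G1 hx hlam0) heps.le

lemma kT_minv_le_one {x lam r eps : ℝ} (hx : 0 ≤ x) (hlam0 : 0 < lam) (heps : 0 < eps) :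
    ((1 + lam * x ^ r) ^ eps)⁻¹ ≤ 1 :=
  inv_le_one_of_one_le₀ (kT_Ge1 hx hlam0 heps)

-- M3' : x^(l+1) * m x ≤ Φ
lemma kT_M3' (l : ℕ) {x lam eps : ℝ} (hx : 0 ≤ x) (hlam0 : 0 < lam) (heps : 0 < eps) :
    x ^ (l+1) * ((1 + lam * x ^ (((l:ℝ)+1)/eps)) ^ eps)⁻¹ ≤ lam ^ (-eps) := by
  have hG : (0:ℝ) < (1 + lam * x ^ (((l:ℝ)+1)/eps)) ^ eps := by
    have := kT_Ge1 (r := ((l:ℝ)+1)/eps) hx hlam0 heps; linarith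
  rw [← div_eq_mul_inv, div_le_iff₀ hG]
  have hcast : x ^ (l+1) = x ^ ((l:ℝ)+1) := by
    rw [← Real.rpow_natCast x (l+1)]; push_cast; ring_nf
  rw [hcast]
  exact kT_core l hx hlam0 heps

-- M3 : x^l * m x ≤ Φ
lemma kT_M3 (l : ℕ) {x lam eps : ℝ} (hx : 0 ≤ x) (hlam0 : 0 < lam) (hlam1 : lam < 1) (heps : 0 < eps) :
    x ^ l * ((1 + lam * x ^ (((l:ℝ)+1)/eps)) ^ eps)⁻¹ ≤ lam ^ (-eps) := by
  rcases le_total x 1 with hx1 | hx1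
  · calc x ^ l * ((1 + lam * x ^ (((l:ℝ)+1)/eps)) ^ eps)⁻¹
        ≤ 1 * 1 := by
          apply mul_le_mul (pow_le_one₀ hx hx1) (kT_minv_le_one hx hlam0 heps)
            (by positivity) one_pos.le
      _ ≤ lam ^ (-eps) := by rw [one_mul]; exact kT_phi1 hlam0 hlam1 heps
  · calc x ^ l * ((1 + lam * x ^ (((l:ℝ)+1)/eps)) ^ eps)⁻¹
        ≤ x ^ (l+1) * ((1 + lam * x ^ (((l:ℝ)+1)/eps)) ^ eps)⁻¹ := by
          apply mul_le_mul_of_nonneg_right (pow_le_pow_right₀ hx1 (Nat.le_succ l)) (by positivity)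
      _ ≤ lam ^ (-eps) := kT_M3' l hx hlam0 heps

-- base : lam * x^r * G^(-eps-1) ≤ 1 (times (G^eps)⁻¹ structure)
lemma kT_split {x lam r eps : ℝ} (hx : 0 ≤ x) (hlam0 : 0 < lam) :
    (1 + lam * x ^ r) ^ (-eps-1) = (1 + lam * x ^ r)⁻¹ * ((1 + lam * x ^ r) ^ eps)⁻¹ := by
  have hG : (0:ℝ) < 1 + lam * x ^ r := lt_of_lt_of_le one_pos (kT_G1 hx hlam0)
  rw [show -eps-1 = (-1) + (-eps) by ring, Real.rpow_add hG, Real.rpow_neg_one,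
    Real.rpow_neg hG.le]

lemma kT_base {x lam r eps : ℝ} (hx : 0 ≤ x) (hlam0 : 0 < lam) (heps : 0 < eps) :
    lam * x ^ r * (1 + lam * x ^ r) ^ (-eps-1) ≤ 1 := by
  have hG : (0:ℝ) < 1 + lam * x ^ r := lt_of_lt_of_le one_pos (kT_G1 hx hlam0)
  rw [kT_split hx hlam0]
  calc lam * x ^ r * ((1 + lam * x ^ r)⁻¹ * ((1 + lam * x ^ r) ^ eps)⁻¹)
      = (lam * x ^ r * (1 + lam * x ^ r)⁻¹) * ((1 + lam * x ^ r) ^ eps)⁻¹ := by ring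
    _ ≤ 1 * 1 := by
        apply mul_le_mul _ (kT_minv_le_one hx hlam0 heps) (by positivity) one_pos.le
        rw [← div_eq_mul_inv, div_le_one hG]; linarith
    _ = 1 := one_mul 1

-- D := lam * x^(r-1) * G^(-eps-1)
lemma kT_D1 (l : ℕ) {x lam eps : ℝ} (hx : 0 ≤ x) (hlam0 : 0 < lam) (hlam1 : lam < 1)
    (heps : 0 < eps) (heps2 : eps ≤ 1/2) (hl : 1 ≤ l) :
    lam * x ^ (((l:ℝ)+1)/eps - 1) * (1 + lam * x ^ (((l:ℝ)+1)/eps)) ^ (-eps-1) ≤ lam ^ (-eps) := by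
  set r := ((l:ℝ)+1)/eps with hrdef
  have hr2 : 2 ≤ r := by
    rw [hrdef, le_div_iff₀ heps]
    have : (1:ℝ) ≤ (l:ℝ) := by exact_mod_cast hl
    nlinarith
  have hΦ := kT_phi1 (eps := eps) hlam0 hlam1 heps
  rcases le_total x 1 with hx1 | hx1
  · have h1 : x ^ (r-1) ≤ 1 := Real.rpow_le_one hx hx1 (by linarith)
    have h2 : (1 + lam * x ^ r) ^ (-eps-1) ≤ 1 :=
      Real.rpow_le_one_of_one_le_of_nonpos (kT_G1 hx hlam0) (by linarith)
    have h3 : (0:ℝ) ≤ (1 + lam * x ^ r) ^ (-eps-1) := Real.rpow_nonneg (by nlinarith [Real.rpow_nonneg hx r]) _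
    have hA : lam * x ^ (r-1) ≤ 1 := by nlinarith [Real.rpow_nonneg hx (r-1)]
    calc lam * x ^ (r-1) * (1 + lam * x ^ r) ^ (-eps-1) ≤ 1 * 1 :=
          mul_le_mul hA h2 h3 one_pos.le
      _ ≤ lam ^ (-eps) := by rw [one_mul]; exact hΦ
  · have h1 : x ^ (r-1) ≤ x ^ r :=
      Real.rpow_le_rpow_of_exponent_le hx1 (by linarith)
    have h3 : (0:ℝ) ≤ (1 + lam * x ^ r) ^ (-eps-1) := Real.rpow_nonneg (by nlinarith [Real.rpow_nonneg hx r]) _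
    calc lam * x ^ (r-1) * (1 + lam * x ^ r) ^ (-eps-1)
        ≤ lam * x ^ r * (1 + lam * x ^ r) ^ (-eps-1) :=
          mul_le_mul_of_nonneg_right (mul_le_mul_of_nonneg_left h1 hlam0.le) h3
      _ ≤ 1 := kT_base hx hlam0 heps
      _ ≤ lam ^ (-eps) := hΦ

lemma kT_D3 (l : ℕ) {x t lam eps : ℝ} (ht : 0 ≤ t) (htx : t ≤ x) (hlam0 : 0 < lam)
    (hlam1 : lam < 1) (heps : 0 < eps) :
    lam * x ^ (((l:ℝ)+1)/eps - 1) * (1 + lam * x ^ (((l:ℝ)+1)/eps)) ^ (-eps-1) * t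
      ≤ lam ^ (-eps) := by
  set r := ((l:ℝ)+1)/eps with hrdef
  have hx : 0 ≤ x := ht.trans htx
  have hΦ := kT_phi1 (eps := eps) hlam0 hlam1 heps
  have h3 : (0:ℝ) ≤ (1 + lam * x ^ r) ^ (-eps-1) :=
    Real.rpow_nonneg (by nlinarith [Real.rpow_nonneg hx r]) _
  rcases hx.eq_or_lt with h0 | hxpos
  · have htz : t = 0 := le_antisymm (htx.trans h0.ge) ht
    rw [htz, mul_zero]
    positivity
  · have hD : (0:ℝ) ≤ lam * x ^ (r-1) * (1 + lam * x ^ r) ^ (-eps-1) := by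
      have := Real.rpow_nonneg hx (r-1); positivity
    calc lam * x ^ (r-1) * (1 + lam * x ^ r) ^ (-eps-1) * t
        ≤ lam * x ^ (r-1) * (1 + lam * x ^ r) ^ (-eps-1) * x :=
          mul_le_mul_of_nonneg_left htx hD
      _ = lam * x ^ r * (1 + lam * x ^ r) ^ (-eps-1) := by
          rw [Real.rpow_sub_one hxpos.ne' r]; field_simp
      _ ≤ 1 := kT_base hx hlam0 heps
      _ ≤ lam ^ (-eps) := hΦ

lemma kT_D2 (l : ℕ) {x t lam eps : ℝ} (ht : 0 ≤ t) (htx : t ≤ x) (hlam0 : 0 < lam)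
    (hlam1 : lam < 1) (heps : 0 < eps) :
    lam * x ^ (((l:ℝ)+1)/eps - 1) * (1 + lam * x ^ (((l:ℝ)+1)/eps)) ^ (-eps-1) * t ^ (l+1)
      ≤ lam ^ (-eps) := by
  set r := ((l:ℝ)+1)/eps with hrdef
  have hx : 0 ≤ x := ht.trans htx
  have hΦ := kT_phi1 (eps := eps) hlam0 hlam1 heps
  have hG : (0:ℝ) < 1 + lam * x ^ r := lt_of_lt_of_le one_pos (kT_G1 hx hlam0)
  have h3 : (0:ℝ) ≤ (1 + lam * x ^ r) ^ (-eps-1) := Real.rpow_nonneg hG.le _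
  rcases hx.eq_or_lt with h0 | hxpos
  · have htz : t = 0 := le_antisymm (htx.trans h0.ge) ht
    rw [htz, zero_pow (Nat.succ_ne_zero l), mul_zero]
    positivity
  · have hD : (0:ℝ) ≤ lam * x ^ (r-1) * (1 + lam * x ^ r) ^ (-eps-1) := by
      have := Real.rpow_nonneg hx (r-1); positivity
    have hstep : t ^ (l+1) ≤ x ^ (l+1) := pow_le_pow_left₀ ht htx _
    have hxid : x ^ (r-1) * x ^ (l+1) = x ^ r * x ^ l := by
      rw [← Real.rpow_natCast x (l+1), ← Real.rpow_natCast x l,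
        ← Real.rpow_add hxpos, ← Real.rpow_add hxpos]
      congr 1
      push_cast
      ring
    have hB : lam * x ^ r * (1 + lam * x ^ r)⁻¹ ≤ 1 := by
      rw [← div_eq_mul_inv, div_le_one hG]; linarith
    have hM3 := kT_M3 l (x := x) hx hlam0 hlam1 heps
    calc lam * x ^ (r-1) * (1 + lam * x ^ r) ^ (-eps-1) * t ^ (l+1)
        ≤ lam * x ^ (r-1) * (1 + lam * x ^ r) ^ (-eps-1) * x ^ (l+1) :=
          mul_le_mul_of_nonneg_left hstep hD
      _ = (lam * x ^ r * (1 + lam * x ^ r)⁻¹) * (x ^ l * ((1 + lam * x ^ r) ^ eps)⁻¹) := by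
          rw [kT_split hx hlam0]
          rw [show lam * x ^ (r-1) * ((1 + lam * x ^ r)⁻¹ * ((1 + lam * x ^ r) ^ eps)⁻¹) * x ^ (l+1)
            = lam * (x ^ (r-1) * x ^ (l+1)) * ((1 + lam * x ^ r)⁻¹ * ((1 + lam * x ^ r) ^ eps)⁻¹) by ring, hxid]
          ring
      _ ≤ 1 * lam ^ (-eps) := by
          apply mul_le_mul hB hM3 (by positivity) one_pos.le
      _ = lam ^ (-eps) := one_mul _

lemma kT_m_lip (l : ℕ) (hl : 1 ≤ l) {t s lam eps K_h a : ℝ} (ht : 0 ≤ t) (hts : t ≤ s)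
    (hlam0 : 0 < lam) (hlam1 : lam < 1) (heps : 0 < eps) (heps2 : eps ≤ 1/2)
    (hK_h : 0 < K_h) (ha : 0 < a) :
    |((1 + lam * s ^ (((l:ℝ)+1)/eps)) ^ eps)⁻¹ - ((1 + lam * t ^ (((l:ℝ)+1)/eps)) ^ eps)⁻¹|
      * (K_h * (1 + t ^ (l+1)) + a * t)
    ≤ ((l:ℝ)+1) * (2*K_h + a) * lam ^ (-eps) * (s - t) := by
  set r := ((l:ℝ)+1)/eps with hrdef
  have hr2 : 2 ≤ r := by
    rw [hrdef, le_div_iff₀ heps]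
    have : (1:ℝ) ≤ (l:ℝ) := by exact_mod_cast hl
    nlinarith
  have hepsr : eps * r = (l:ℝ)+1 := by
    rw [hrdef, mul_div_cancel₀ _ heps.ne']
  have hF : 0 < K_h * (1 + t ^ (l+1)) + a * t := by
    have h1 : (0:ℝ) ≤ t ^ (l+1) := pow_nonneg ht _
    nlinarith
  set F := K_h * (1 + t ^ (l+1)) + a * t with hFdef
  set Φ := lam ^ (-eps) with hPhidef
  set C := ((l:ℝ)+1) * (2*K_h + a) * Φ / F with hCdef
  set f : ℝ → ℝ := fun x => (1 + lam * x ^ r) ^ (-eps) with hfdef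
  set f' : ℝ → ℝ := fun x => -eps * (1 + lam * x ^ r) ^ (-eps-1) * (lam * (r * x ^ (r-1)))
    with hf'def
  have hder : ∀ x ∈ Set.Icc t s, HasDerivWithinAt f (f' x) (Set.Icc t s) x := by
    intro x hx
    have hx0 : 0 ≤ x := ht.trans hx.1
    have hG : (0:ℝ) < 1 + lam * x ^ r := lt_of_lt_of_le one_pos (kT_G1 hx0 hlam0)
    have h1 : HasDerivAt (fun y : ℝ => y ^ r) (r * x ^ (r-1)) x :=
      Real.hasDerivAt_rpow_const (Or.inr (by linarith))
    have h2 : HasDerivAt (fun y : ℝ => 1 + lam * y ^ r) (lam * (r * x ^ (r-1))) x :=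
      (h1.const_mul lam).const_add 1
    have h3 := h2.rpow_const (p := -eps) (Or.inl hG.ne')
    have h4 : HasDerivAt f (f' x) x := by
      convert h3 using 1
      rw [hf'def]; ring
    exact h4.hasDerivWithinAt
  have hbound : ∀ x ∈ Set.Icc t s, ‖f' x‖ ≤ C := by
    intro x hx
    have hx0 : 0 ≤ x := ht.trans hx.1
    have hG : (0:ℝ) < 1 + lam * x ^ r := lt_of_lt_of_le one_pos (kT_G1 hx0 hlam0)
    have hA : (0:ℝ) ≤ (1 + lam * x ^ r) ^ (-eps-1) := Real.rpow_nonneg hG.le _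
    have hB : (0:ℝ) ≤ lam * (r * x ^ (r-1)) := by
      have := Real.rpow_nonneg hx0 (r-1)
      positivity
    have hval : f' x = -(eps * ((1 + lam * x ^ r) ^ (-eps-1) * (lam * (r * x ^ (r-1))))) := by
      rw [hf'def]; ring
    rw [hval, norm_neg, Real.norm_eq_abs,
      abs_of_nonneg (mul_nonneg heps.le (mul_nonneg hA hB))]
    have hid : eps * ((1 + lam * x ^ r) ^ (-eps-1) * (lam * (r * x ^ (r-1))))
        = ((l:ℝ)+1) * (lam * x ^ (r-1) * (1 + lam * x ^ r) ^ (-eps-1)) := by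
      rw [← hepsr]; ring
    rw [hid, hCdef, le_div_iff₀ hF]
    have hD1 := kT_D1 l hx0 hlam0 hlam1 heps heps2 hl
    have hD2 := kT_D2 l ht hx.1 hlam0 hlam1 heps
    have hD3 := kT_D3 l ht hx.1 hlam0 hlam1 heps
    have hl1 : (0:ℝ) ≤ (l:ℝ)+1 := by positivity
    have e1 := mul_le_mul_of_nonneg_left hD1 hK_h.le
    have e2 := mul_le_mul_of_nonneg_left hD2 hK_h.le
    have e3 := mul_le_mul_of_nonneg_left hD3 ha.le
    rw [hFdef]
    nlinarith [mul_le_mul_of_nonneg_left e1 hl1, mul_le_mul_of_nonneg_left e2 hl1,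
      mul_le_mul_of_nonneg_left e3 hl1]
  have hmvt := (convex_Icc t s).norm_image_sub_le_of_norm_hasDerivWithin_le hder hbound
    (Set.left_mem_Icc.2 hts) (Set.right_mem_Icc.2 hts)
  -- hmvt : ‖f s - f t‖ ≤ C * ‖s - t‖
  have hfs : f s = ((1 + lam * s ^ r) ^ eps)⁻¹ := by
    rw [hfdef]
    exact Real.rpow_neg (by nlinarith [Real.rpow_nonneg (ht.trans hts) r]) eps
  have hft : f t = ((1 + lam * t ^ r) ^ eps)⁻¹ := by
    rw [hfdef]
    exact Real.rpow_neg (by nlinarith [Real.rpow_nonneg ht r]) eps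
  rw [Real.norm_eq_abs, hfs, hft, Real.norm_eq_abs, abs_of_nonneg (by linarith : (0:ℝ) ≤ s - t)]
    at hmvt
  calc |((1 + lam * s ^ r) ^ eps)⁻¹ - ((1 + lam * t ^ r) ^ eps)⁻¹| * F
      ≤ (C * (s - t)) * F := by
        apply mul_le_mul_of_nonneg_right hmvt hF.le
    _ = ((l:ℝ)+1) * (2*K_h + a) * Φ * (s - t) := by
        rw [hCdef]; field_simp

lemma kT_aux {E : Type*} [NormedAddCommGroup E] [NormedSpace ℝ E]
    (h : E → E) (K_H K_h a : ℝ) (l : ℕ) (hl : 1 ≤ l)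
    (hK_H : 0 < K_H) (hK_h : 0 < K_h) (ha : 0 < a)
    (hdiff : Differentiable ℝ h)
    (hfb : ∀ θ : E, ‖fderiv ℝ h θ‖ ≤ K_H * (1 + ‖θ‖ ^ l))
    (hh_bd : ∀ θ : E, ‖h θ‖ ≤ K_h * (1 + ‖θ‖ ^ (l + 1)))
    {lam eps : ℝ} (hlam0 : 0 < lam) (hlam1 : lam < 1) (heps : 0 < eps) (heps2 : eps ≤ 1/2)
    (θ θ' : E) (hord : ‖θ'‖ ≤ ‖θ‖) :
    ‖(a • θ + ((1 + lam * ‖θ‖ ^ (((l : ℝ) + 1) / eps)) ^ eps)⁻¹ • (h θ - a • θ)) -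
      (a • θ' + ((1 + lam * ‖θ'‖ ^ (((l : ℝ) + 1) / eps)) ^ eps)⁻¹ • (h θ' - a • θ'))‖ ≤
    (2 * a + 4 * K_H + ((l : ℝ) + 1) * (2 * K_h + a)) * lam ^ (-eps) * ‖θ - θ'‖ := by
  set r := ((l:ℝ)+1)/eps with hrdef
  set ms := ((1 + lam * ‖θ‖ ^ r) ^ eps)⁻¹ with hmsdef
  set mt := ((1 + lam * ‖θ'‖ ^ r) ^ eps)⁻¹ with hmtdef
  set n := ‖θ - θ'‖ with hndef
  have hn0 : 0 ≤ n := norm_nonneg _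
  have hΦ := kT_phi1 (eps := eps) hlam0 hlam1 heps
  have hΦ0 : (0:ℝ) < lam ^ (-eps) := Real.rpow_pos_of_pos hlam0 _
  have hms0 : 0 ≤ ms := by
    rw [hmsdef]
    have := kT_Ge1 (x := ‖θ‖) (r := r) (norm_nonneg θ) hlam0 heps
    positivity
  have hms1 : ms ≤ 1 := kT_minv_le_one (norm_nonneg θ) hlam0 heps
  -- decomposition
  have hdecomp : (a • θ + ms • (h θ - a • θ)) - (a • θ' + mt • (h θ' - a • θ'))
      = a • (θ - θ') + ms • ((h θ - h θ') - a • (θ - θ')) + (ms - mt) • (h θ' - a • θ') := by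
    module
  rw [hdecomp]
  -- Lipschitz bound for h on the ball of radius ‖θ‖
  have hlip : ‖h θ - h θ'‖ ≤ K_H * (1 + ‖θ‖ ^ l) * n := by
    have hconv : Convex ℝ (Metric.closedBall (0:E) ‖θ‖) := convex_closedBall _ _
    refine hconv.norm_image_sub_le_of_norm_fderiv_le (fun x _ => hdiff x) ?_ ?_ ?_
    · intro x hx
      rw [Metric.mem_closedBall, dist_zero_right] at hx
      calc ‖fderiv ℝ h x‖ ≤ K_H * (1 + ‖x‖ ^ l) := hfb x
        _ ≤ K_H * (1 + ‖θ‖ ^ l) := by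
            have := pow_le_pow_left₀ (norm_nonneg x) hx l
            nlinarith
    · rw [Metric.mem_closedBall, dist_zero_right]; exact hord
    · rw [Metric.mem_closedBall, dist_zero_right]
  -- term bounds
  have hT1 : ‖a • (θ - θ')‖ ≤ a * lam ^ (-eps) * n := by
    rw [norm_smul, Real.norm_eq_abs, abs_of_pos ha, ← hndef]
    nlinarith [mul_nonneg ha.le hn0]
  have hT2 : ‖ms • ((h θ - h θ') - a • (θ - θ'))‖ ≤ (2 * K_H + a) * lam ^ (-eps) * n := by
    rw [norm_smul, Real.norm_eq_abs, abs_of_nonneg hms0]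
    have h1 : ‖(h θ - h θ') - a • (θ - θ')‖ ≤ K_H * (1 + ‖θ‖ ^ l) * n + a * n := by
      calc ‖(h θ - h θ') - a • (θ - θ')‖ ≤ ‖h θ - h θ'‖ + ‖a • (θ - θ')‖ := norm_sub_le _ _
        _ ≤ K_H * (1 + ‖θ‖ ^ l) * n + a * n := by
            rw [norm_smul, Real.norm_eq_abs, abs_of_pos ha]
            exact add_le_add hlip le_rfl
    have hM3 := kT_M3 l (x := ‖θ‖) (norm_nonneg θ) hlam0 hlam1 heps
    rw [← hmsdef] at hM3
    calc ms * ‖(h θ - h θ') - a • (θ - θ')‖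
        ≤ ms * (K_H * (1 + ‖θ‖ ^ l) * n + a * n) :=
          mul_le_mul_of_nonneg_left h1 hms0
      _ = (ms * K_H + (‖θ‖ ^ l * ms) * K_H + ms * a) * n := by ring
      _ ≤ (lam ^ (-eps) * K_H + lam ^ (-eps) * K_H + lam ^ (-eps) * a) * n := by
          have e1 : ms ≤ lam ^ (-eps) := hms1.trans hΦ
          have e2 : ‖θ‖ ^ l * ms ≤ lam ^ (-eps) := hM3
          have e3 : ms * a ≤ lam ^ (-eps) * a := mul_le_mul_of_nonneg_right e1 ha.le
          apply mul_le_mul_of_nonneg_right _ hn0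
          nlinarith
      _ = (2 * K_H + a) * lam ^ (-eps) * n := by ring
  have hT3 : ‖(ms - mt) • (h θ' - a • θ')‖ ≤ ((l:ℝ)+1) * (2 * K_h + a) * lam ^ (-eps) * n := by
    rw [norm_smul, Real.norm_eq_abs]
    have hF' : ‖h θ' - a • θ'‖ ≤ K_h * (1 + ‖θ'‖ ^ (l+1)) + a * ‖θ'‖ := by
      calc ‖h θ' - a • θ'‖ ≤ ‖h θ'‖ + ‖a • θ'‖ := norm_sub_le _ _
        _ ≤ K_h * (1 + ‖θ'‖ ^ (l+1)) + a * ‖θ'‖ := by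
            rw [norm_smul, Real.norm_eq_abs, abs_of_pos ha]
            exact add_le_add (hh_bd θ') le_rfl
    have hml := kT_m_lip l hl (norm_nonneg θ') hord hlam0 hlam1 heps heps2 hK_h ha
    rw [← hmsdef, ← hmtdef] at hml
    have hst : ‖θ‖ - ‖θ'‖ ≤ n := by
      rw [hndef]; exact norm_sub_norm_le θ θ'
    calc |ms - mt| * ‖h θ' - a • θ'‖
        ≤ |ms - mt| * (K_h * (1 + ‖θ'‖ ^ (l+1)) + a * ‖θ'‖) :=
          mul_le_mul_of_nonneg_left hF' (abs_nonneg _)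
      _ ≤ ((l:ℝ)+1) * (2 * K_h + a) * lam ^ (-eps) * (‖θ‖ - ‖θ'‖) := hml
      _ ≤ ((l:ℝ)+1) * (2 * K_h + a) * lam ^ (-eps) * n := by
          apply mul_le_mul_of_nonneg_left hst
          positivity
  calc ‖a • (θ - θ') + ms • ((h θ - h θ') - a • (θ - θ')) + (ms - mt) • (h θ' - a • θ')‖
      ≤ ‖a • (θ - θ') + ms • ((h θ - h θ') - a • (θ - θ'))‖ + ‖(ms - mt) • (h θ' - a • θ')‖ :=
        norm_add_le _ _
    _ ≤ (‖a • (θ - θ')‖ + ‖ms • ((h θ - h θ') - a • (θ - θ'))‖) + ‖(ms - mt) • (h θ' - a • θ')‖ := by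
        gcongr
        exact norm_add_le _ _
    _ ≤ (a * lam ^ (-eps) * n + (2 * K_H + a) * lam ^ (-eps) * n)
          + ((l:ℝ)+1) * (2 * K_h + a) * lam ^ (-eps) * n :=
        add_le_add (add_le_add hT1 hT2) hT3
    _ ≤ (2 * a + 4 * K_H + ((l : ℝ) + 1) * (2 * K_h + a)) * lam ^ (-eps) * n := by
        nlinarith [mul_nonneg hΦ0.le hn0, hK_H.le]

theorem kTULA_tamed_lipschitz
    {d : ℕ} (hd : 0 < d)
    (u : EuclideanSpace ℝ (Fin d) → ℝ) (hu : ContDiff ℝ 3 u)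
    (h : EuclideanSpace ℝ (Fin d) → EuclideanSpace ℝ (Fin d))
    (H : EuclideanSpace ℝ (Fin d) →
      EuclideanSpace ℝ (Fin d) →L[ℝ] EuclideanSpace ℝ (Fin d))
    (hgrad : ∀ θ, h θ = gradient u θ)
    (hHess : ∀ θ, H θ = fderiv ℝ (gradient u) θ)
    (L K_H K_h a b : ℝ)
    (hL : 0 < L) (hK_H : 0 < K_H) (hK_h : 0 < K_h) (ha : 0 < a) (hb : 0 < b)
    (l : ℕ) (hl : 1 ≤ l)
    (hH_lip : ∀ θ θ' : EuclideanSpace ℝ (Fin d),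
      ‖H θ - H θ'‖ ≤ L * (1 + ‖θ‖ + ‖θ'‖) ^ (l - 1) * ‖θ - θ'‖)
    (hH_bd : ∀ θ : EuclideanSpace ℝ (Fin d), ‖H θ‖ ≤ K_H * (1 + ‖θ‖ ^ l))
    (hh_bd : ∀ θ : EuclideanSpace ℝ (Fin d), ‖h θ‖ ≤ K_h * (1 + ‖θ‖ ^ (l + 1)))
    (hdiss : ∀ θ : EuclideanSpace ℝ (Fin d), a * ‖θ‖ ^ 2 - b ≤ (inner ℝ (h θ) θ : ℝ))
    (hlam : ℝ → ℝ → EuclideanSpace ℝ (Fin d) → EuclideanSpace ℝ (Fin d))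
    (hlam_def : ∀ (lam eps : ℝ) (θ : EuclideanSpace ℝ (Fin d)),
      hlam lam eps θ =
        a • θ + ((1 + lam * ‖θ‖ ^ (((l : ℝ) + 1) / eps)) ^ eps)⁻¹ • (h θ - a • θ)) :
    ∀ (θ θ' : EuclideanSpace ℝ (Fin d)) (lam eps : ℝ),
      0 < lam → lam < 1 → 0 < eps → eps ≤ 1 / 2 →
      ‖hlam lam eps θ - hlam lam eps θ'‖ ≤
        (2 * a + 4 * K_H + ((l : ℝ) + 1) * (2 * K_h + a)) * lam ^ (-eps) * ‖θ - θ'‖ := by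
  have hgrad' : h = gradient u := funext hgrad
  have hfd : ContDiff ℝ 1 (fderiv ℝ u) := hu.fderiv_right (by norm_num)
  have hdiff : Differentiable ℝ h := by
    rw [hgrad']
    have : gradient u = fun x =>
        (InnerProductSpace.toDual ℝ (EuclideanSpace ℝ (Fin d))).symm (fderiv ℝ u x) := rfl
    rw [this]
    exact (InnerProductSpace.toDual ℝ
      (EuclideanSpace ℝ (Fin d))).symm.differentiable.comp (hfd.differentiable one_ne_zero)
  have hfb : ∀ θ : EuclideanSpace ℝ (Fin d), ‖fderiv ℝ h θ‖ ≤ K_H * (1 + ‖θ‖ ^ l) := by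
    intro θ
    rw [hgrad', ← hHess θ]
    exact hH_bd θ
  intro θ θ' lam eps hlam0 hlam1 heps heps2
  rw [hlam_def, hlam_def]
  rcases le_total ‖θ'‖ ‖θ‖ with hord | hord
  · exact kT_aux h K_H K_h a l hl hK_H hK_h ha hdiff hfb hh_bd hlam0 hlam1 heps heps2 θ θ' hord
  · rw [norm_sub_rev, norm_sub_rev θ θ']
    exact kT_aux h K_H K_h a l hl hK_H hK_h ha hdiff hfb hh_bd hlam0 hlam1 heps heps2 θ' θ hord
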